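/- Let 0 < l₁ < L, let c₂, ρ, α, β, γ, μ be positive reals with α₁ := α − γ²β > 0, and let d₁ : ℝ → ℝ be continuous and nonnegative on [l₁, L]. Suppose v, p : ℝ × ℝ → ℂ are twice continuously differentiable on [0,l₁]×[0,∞) and y : ℝ × ℝ → ℂ is twice continuously differentiable on [l₁,L]×[0,∞), satisfying for all t ≥ 0: ρ v_tt − α v_xx + γβ p_xx = 0 and μ p_tt − β p_xx + γβ v_xx = 0 on [0,l₁]; y_tt − c₂ y_xx + d₁(x) y_t = 0 on [l₁,L]; the boundary conditions v(0,t)=p(0,t)=0, y(L,t)=0; the continuity condition v(l₁,t)=y(l₁,t); and the transmission conditions α v_x(l₁,t) − γβ p_x(l₁,t) = c₂ y_x(l₁,t) and p_x(l₁,t) = γ v_x(l₁,t). Define E(t) = (1/2)∫₀^{l₁}(ρ|v_t|² + α₁|v_x|² + μ|p_t|² + β|γ v_x − p_x|²)dx + (1/2)∫_{l₁}^{L}(|y_t|² + c₂|y_x|²)dx. Then for every t > 0, E is differentiable at t and E′(t) = −∫_{l₁}^{L} d₁(x) |y_t(x,t)|² dx. -/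

import Mathlib

open Set MeasureTheory intervalIntegral


noncomputable section Helpers

/-- derivative of re -/
lemma hasDerivAt_re' {f : ℝ → ℂ} {f' : ℂ} {x : ℝ} (h : HasDerivAt f f' x) :
    HasDerivAt (fun u => (f u).re) f'.re x :=
  Complex.reCLM.hasFDerivAt.comp_hasDerivAt x h

lemma hasDerivAt_im' {f : ℝ → ℂ} {f' : ℂ} {x : ℝ} (h : HasDerivAt f f' x) :
    HasDerivAt (fun u => (f u).im) f'.im x :=
  Complex.imCLM.hasFDerivAt.comp_hasDerivAt x h

lemma hasDerivAt_conj' {f : ℝ → ℂ} {f' : ℂ} {x : ℝ} (h : HasDerivAt f f' x) :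
    HasDerivAt (fun u => (starRingEnd ℂ) (f u)) ((starRingEnd ℂ) f') x :=
  Complex.conjCLE.toContinuousLinearMap.hasFDerivAt.comp_hasDerivAt x h

lemma norm_sq_complex (z : ℂ) : ‖z‖ ^ 2 = z.re * z.re + z.im * z.im := by
  rw [← Complex.normSq_eq_norm_sq, Complex.normSq_apply]


lemma hasDerivAt_norm_sq {f : ℝ → ℂ} {f' : ℂ} {s : ℝ} (hf : HasDerivAt f f' s) :
    HasDerivAt (fun u => ‖f u‖ ^ 2) (2 * ((starRingEnd ℂ) (f s) * f').re) s := by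
  have hre := hasDerivAt_re' hf
  have him := hasDerivAt_im' hf
  have h := (hre.mul hre).add (him.mul him)
  have hfun : (fun u => ‖f u‖ ^ 2) = fun u => (f u).re * (f u).re + (f u).im * (f u).im := by
    funext u; exact norm_sq_complex _
  rw [hfun]
  refine h.congr_deriv ?_
  simp [Complex.mul_re, Complex.conj_re, Complex.conj_im]
  ring

/-- slice continuity in the first variable -/
lemma sliceX {E : Type*} [TopologicalSpace E] {g : ℝ → ℝ → E} {a b : ℝ}
    (h : ContinuousOn (fun q : ℝ × ℝ => g q.1 q.2) (Icc a b ×ˢ Ici 0)) {t : ℝ}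
    (ht : (0:ℝ) ≤ t) : ContinuousOn (fun x => g x t) (Icc a b) :=
  h.comp (f := fun x => (x, t)) (ContinuousOn.prodMk continuousOn_id continuousOn_const) (fun _ hx => ⟨hx, mem_Ici.2 ht⟩)

/-- slice continuity in the second variable -/
lemma sliceT {E : Type*} [TopologicalSpace E] {g : ℝ → ℝ → E} {a b : ℝ}
    (h : ContinuousOn (fun q : ℝ × ℝ => g q.1 q.2) (Icc a b ×ˢ Ici 0)) {x : ℝ}
    (hx : x ∈ Icc a b) : ContinuousOn (fun s => g x s) (Ici (0:ℝ)) :=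
  h.comp (f := fun s => (x, s)) (ContinuousOn.prodMk continuousOn_const continuousOn_id) (fun _ hs => ⟨hx, hs⟩)

/-- Differentiation under the interval integral, for parameter `t > 0`, with
continuous integrand and derivative on `[a,b] × [0,∞)`. -/
lemma hasDerivAt_int {E : Type*} [NormedAddCommGroup E] [NormedSpace ℝ E]
    (F F' : ℝ → ℝ → E) {a b t : ℝ} (ht : 0 < t) (hab : a ≤ b)
    (hF : ContinuousOn (fun q : ℝ × ℝ => F q.1 q.2) (Icc a b ×ˢ Ici 0))
    (hF' : ContinuousOn (fun q : ℝ × ℝ => F' q.1 q.2) (Icc a b ×ˢ Ici 0))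
    (hd : ∀ x ∈ Icc a b, ∀ s ∈ Ici (0:ℝ), HasDerivAt (fun s => F x s) (F' x s) s) :
    HasDerivAt (fun s => ∫ x in a..b, F x s) (∫ x in a..b, F' x t) t := by
  have hsub : Icc a b ×ˢ Icc (t/2) (t + t/2) ⊆ Icc a b ×ˢ Ici 0 := by
    intro q hq
    exact ⟨hq.1, le_trans (by positivity) hq.2.1⟩
  obtain ⟨M, hM⟩ := (isCompact_Icc.prod isCompact_Icc).exists_bound_of_continuousOn
    (hF'.mono hsub)
  have hball : Metric.ball t (t/2) ⊆ Icc (t/2) (t + t/2) := by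
    intro s hs
    rw [Real.ball_eq_Ioo] at hs
    constructor <;> [linarith [hs.1]; linarith [hs.2]]
  have hballpos : ∀ s ∈ Metric.ball t (t/2), (0:ℝ) ≤ s := by
    intro s hs; have := (hball hs).1; linarith
  have hIoc : uIoc a b ⊆ Icc a b := by
    rw [uIoc_of_le hab]; exact Ioc_subset_Icc_self
  have main := intervalIntegral.hasDerivAt_integral_of_dominated_loc_of_deriv_le
    (F := fun s x => F x s) (F' := fun s x => F' x s) (x₀ := t) (a := a) (b := b)
    (bound := fun _ => M) (μ := MeasureTheory.volume)
    (Metric.ball_mem_nhds t (by positivity : (0:ℝ) < t/2))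
    (Filter.eventually_of_mem (Ioi_mem_nhds ht) (fun s hs => by
      exact ((sliceX hF (le_of_lt hs)).mono hIoc).aestronglyMeasurable
        (measurableSet_uIoc)))
    (((sliceX hF (le_of_lt ht)).mono (by rw [uIcc_of_le hab])).intervalIntegrable)
    (((sliceX hF' (le_of_lt ht)).mono hIoc).aestronglyMeasurable measurableSet_uIoc)
    (MeasureTheory.ae_of_all _ (fun x hx s hs => hM (x, s) ⟨hIoc hx, hball hs⟩))
    intervalIntegrable_const
    (MeasureTheory.ae_of_all _ (fun x hx s hs => hd x (hIoc hx) s (hballpos s hs)))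
  exact main.2


/-- Schwarz: under C¹-type hypotheses on a rectangle, the mixed partial
`∂ₓ f_t` exists at interior points and equals `f_{xt}`. -/
lemma schwarz_mixed (f fx ft fxt : ℝ → ℝ → ℂ) {a b : ℝ}
    (hfx : ∀ x ∈ Icc a b, ∀ t ∈ Ici (0:ℝ), HasDerivAt (fun s => f s t) (fx x t) x)
    (hft : ∀ x ∈ Icc a b, ∀ t ∈ Ici (0:ℝ), HasDerivAt (fun s => f x s) (ft x t) t)
    (hfxt : ∀ x ∈ Icc a b, ∀ t ∈ Ici (0:ℝ), HasDerivAt (fun s => fx x s) (fxt x t) t)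
    (hcx : ContinuousOn (fun q : ℝ × ℝ => fx q.1 q.2) (Icc a b ×ˢ Ici 0))
    (hcxt : ContinuousOn (fun q : ℝ × ℝ => fxt q.1 q.2) (Icc a b ×ˢ Ici 0))
    {x t : ℝ} (hx : x ∈ Ioo a b) (ht : 0 < t) :
    HasDerivAt (fun u => ft u t) (fxt x t) x := by
  have hab : a ≤ b := le_of_lt (lt_trans hx.1 hx.2)
  -- Step A: key identity ft u t - ft a t = ∫ ξ in a..u, fxt ξ t
  have key : ∀ u ∈ Icc a b, ft u t - ft a t = ∫ ξ in a..u, fxt ξ t := by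
    intro u hu
    have hau : a ≤ u := hu.1
    have hsubIcc : Icc a u ⊆ Icc a b := Icc_subset_Icc le_rfl hu.2
    have h1 : HasDerivAt (fun s => ∫ ξ in a..u, fx ξ s) (∫ ξ in a..u, fxt ξ t) t :=
      hasDerivAt_int fx fxt ht hau
        (hcx.mono (prod_mono_left hsubIcc)) (hcxt.mono (prod_mono_left hsubIcc))
        (fun ξ hξ s hs => hfxt ξ (hsubIcc hξ) s hs)
    have heq : (fun s => f u s - f a s) =ᶠ[nhds t] (fun s => ∫ ξ in a..u, fx ξ s) := by
      refine Filter.eventually_of_mem (Ioi_mem_nhds ht) (fun s hs => ?_)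
      have hs0 : (0:ℝ) ≤ s := le_of_lt hs
      exact (intervalIntegral.integral_eq_sub_of_hasDerivAt (f := fun ξ => f ξ s)
        (fun ξ hξ => hfx ξ (hsubIcc (by rwa [uIcc_of_le hau] at hξ)) s hs0)
        (((sliceX hcx hs0).mono (by rw [uIcc_of_le hau]; exact hsubIcc)).intervalIntegrable)).symm
    have h2 : HasDerivAt (fun s => f u s - f a s) (∫ ξ in a..u, fxt ξ t) t :=
      h1.congr_of_eventuallyEq heq
    have h3 : HasDerivAt (fun s => f u s - f a s) (ft u t - ft a t) t :=
      (hft u hu t (le_of_lt ht)).sub (hft a (left_mem_Icc.2 hab) t (le_of_lt ht))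
    exact (h3.unique h2)
  -- Step B: differentiate u ↦ ∫ ξ in a..u, fxt ξ t at x
  have hcont1 : ContinuousOn (fun ξ => fxt ξ t) (Icc a b) := sliceX hcxt (le_of_lt ht)
  have h4 : HasDerivAt (fun u => ∫ ξ in a..u, fxt ξ t) (fxt x t) x :=
    intervalIntegral.integral_hasDerivAt_right
      ((hcont1.mono (by rw [uIcc_of_le hx.1.le]; exact Icc_subset_Icc le_rfl hx.2.le)).intervalIntegrable)
      ((hcont1.mono Ioo_subset_Icc_self).stronglyMeasurableAtFilter isOpen_Ioo x hx)
      (hcont1.continuousAt (Icc_mem_nhds hx.1 hx.2))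
  have h5 : HasDerivAt (fun u => ft a t + ∫ ξ in a..u, fxt ξ t) (fxt x t) x := h4.const_add _
  refine h5.congr_of_eventuallyEq ?_
  refine Filter.eventually_of_mem (Ioo_mem_nhds hx.1 hx.2) (fun u hu => ?_)
  have hk := key u (Ioo_subset_Icc_self hu)
  show ft u t = ft a t + ∫ ξ in a..u, fxt ξ t
  linear_combination hk


lemma contOn_reConjMul {g h : ℝ × ℝ → ℂ} {s : Set (ℝ × ℝ)}
    (hg : ContinuousOn g s) (hh : ContinuousOn h s) :
    ContinuousOn (fun q => ((starRingEnd ℂ) (g q) * h q).re) s :=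
  Complex.continuous_re.comp_continuousOn
    ((Complex.continuous_conj.comp_continuousOn hg).mul hh)

lemma contOn_reConjMul1 {g h : ℝ → ℂ} {s : Set ℝ}
    (hg : ContinuousOn g s) (hh : ContinuousOn h s) :
    ContinuousOn (fun q => ((starRingEnd ℂ) (g q) * h q).re) s :=
  Complex.continuous_re.comp_continuousOn
    ((Complex.continuous_conj.comp_continuousOn hg).mul hh)

end Helpers

section Main
open Set

/-- `f : (x, t) ↦ f x t` is twice continuously differentiable on
`[a, b] × [0, ∞)`, with partial derivatives `fx, ft, fxx, ftt, fxt`. -/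
def IsC2On (f fx ft fxx ftt fxt : ℝ → ℝ → ℂ) (a b : ℝ) : Prop :=
  (∀ x ∈ Set.Icc a b, ∀ t ∈ Set.Ici (0 : ℝ),
      HasDerivAt (fun s => f s t) (fx x t) x ∧
      HasDerivAt (fun s => f x s) (ft x t) t ∧
      HasDerivAt (fun s => fx s t) (fxx x t) x ∧
      HasDerivAt (fun s => ft x s) (ftt x t) t ∧
      HasDerivAt (fun s => fx x s) (fxt x t) t) ∧
  ContinuousOn (fun q : ℝ × ℝ => f q.1 q.2) (Set.Icc a b ×ˢ Set.Ici 0) ∧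
  ContinuousOn (fun q : ℝ × ℝ => fx q.1 q.2) (Set.Icc a b ×ˢ Set.Ici 0) ∧
  ContinuousOn (fun q : ℝ × ℝ => ft q.1 q.2) (Set.Icc a b ×ˢ Set.Ici 0) ∧
  ContinuousOn (fun q : ℝ × ℝ => fxx q.1 q.2) (Set.Icc a b ×ˢ Set.Ici 0) ∧
  ContinuousOn (fun q : ℝ × ℝ => ftt q.1 q.2) (Set.Icc a b ×ˢ Set.Ici 0) ∧
  ContinuousOn (fun q : ℝ × ℝ => fxt q.1 q.2) (Set.Icc a b ×ˢ Set.Ici 0)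

/-- Energy dissipation identity for the serially-connected
Piezoelectric–Elastic transmission system with a local viscous damping `d₁`
acting only on the elastic part:
`E'(t) = -∫_{l₁}^{L} d₁(x) |y_t(x,t)|² dx` for every `t > 0`. -/
theorem stmt1 (l₁ L c₂ ρ α β γ μ : ℝ)
    (hl₁ : 0 < l₁) (hl₁L : l₁ < L)
    (hc₂ : 0 < c₂) (hρ : 0 < ρ) (hα : 0 < α) (hβ : 0 < β)
    (hγ : 0 < γ) (hμ : 0 < μ) (hα₁ : 0 < α - γ ^ 2 * β)
    (d₁ : ℝ → ℝ) (hd₁c : ContinuousOn d₁ (Icc l₁ L))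
    (hd₁0 : ∀ x ∈ Icc l₁ L, 0 ≤ d₁ x)
    (v vx vt vxx vtt vxt : ℝ → ℝ → ℂ)
    (p px pt pxx ptt pxt : ℝ → ℝ → ℂ)
    (y yx yt yxx ytt yxt : ℝ → ℝ → ℂ)
    (hv : IsC2On v vx vt vxx vtt vxt 0 l₁)
    (hp : IsC2On p px pt pxx ptt pxt 0 l₁)
    (hy : IsC2On y yx yt yxx ytt yxt l₁ L)
    -- the three PDEs
    (hveq : ∀ t ∈ Ici (0 : ℝ), ∀ x ∈ Icc (0 : ℝ) l₁,
      (ρ : ℂ) * vtt x t - (α : ℂ) * vxx x t + ((γ * β : ℝ) : ℂ) * pxx x t = 0)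
    (hpeq : ∀ t ∈ Ici (0 : ℝ), ∀ x ∈ Icc (0 : ℝ) l₁,
      (μ : ℂ) * ptt x t - (β : ℂ) * pxx x t + ((γ * β : ℝ) : ℂ) * vxx x t = 0)
    (hyeq : ∀ t ∈ Ici (0 : ℝ), ∀ x ∈ Icc l₁ L,
      ytt x t - (c₂ : ℂ) * yxx x t + (d₁ x : ℂ) * yt x t = 0)
    -- boundary conditions
    (hbc0v : ∀ t ∈ Ici (0 : ℝ), v 0 t = 0)
    (hbc0p : ∀ t ∈ Ici (0 : ℝ), p 0 t = 0)
    (hbcL : ∀ t ∈ Ici (0 : ℝ), y L t = 0)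
    -- continuity condition
    (hct : ∀ t ∈ Ici (0 : ℝ), v l₁ t = y l₁ t)
    -- transmission conditions
    (htr1 : ∀ t ∈ Ici (0 : ℝ),
      (α : ℂ) * vx l₁ t - ((γ * β : ℝ) : ℂ) * px l₁ t = (c₂ : ℂ) * yx l₁ t)
    (htr2 : ∀ t ∈ Ici (0 : ℝ), px l₁ t = (γ : ℂ) * vx l₁ t) :
    ∀ t > (0 : ℝ), HasDerivAt
      (fun s : ℝ =>
        (1 / 2) * (∫ x in (0 : ℝ)..l₁,
          (ρ * ‖vt x s‖ ^ 2 + (α - γ ^ 2 * β) * ‖vx x s‖ ^ 2 +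
            μ * ‖pt x s‖ ^ 2 + β * ‖(γ : ℂ) * vx x s - px x s‖ ^ 2)) +
        (1 / 2) * (∫ x in l₁..L, (‖yt x s‖ ^ 2 + c₂ * ‖yx x s‖ ^ 2)))
      (-(∫ x in l₁..L, d₁ x * ‖yt x t‖ ^ 2)) t := by
  intro t ht
  have ht0 : (0:ℝ) ≤ t := ht.le
  obtain ⟨hvd, hvc, hvxc, hvtc, hvxxc, hvttc, hvxtc⟩ := hv
  obtain ⟨hpd, hpc, hpxc, hptc, hpxxc, hpttc, hpxtc⟩ := hp
  obtain ⟨hyd, hyc, hyxc, hytc, hyxxc, hyttc, hyxtc⟩ := hy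
  have h0l : (0:ℝ) ≤ l₁ := hl₁.le
  have hlL : l₁ ≤ L := hl₁L.le
  have h0mem : (0:ℝ) ∈ Icc (0:ℝ) l₁ := left_mem_Icc.2 h0l
  have hl₁mem : l₁ ∈ Icc (0:ℝ) l₁ := right_mem_Icc.2 h0l
  have hl₁mem' : l₁ ∈ Icc l₁ L := left_mem_Icc.2 hlL
  have hLmem : L ∈ Icc l₁ L := right_mem_Icc.2 hlL
  -- derivative integrands
  set F₁' : ℝ → ℝ → ℝ := fun x s =>
    2 * (ρ * ((starRingEnd ℂ) (vt x s) * vtt x s).re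
      + (α - γ ^ 2 * β) * ((starRingEnd ℂ) (vx x s) * vxt x s).re
      + μ * ((starRingEnd ℂ) (pt x s) * ptt x s).re
      + β * ((starRingEnd ℂ) ((γ:ℂ) * vx x s - px x s)
          * ((γ:ℂ) * vxt x s - pxt x s)).re) with hF₁'def
  set F₂' : ℝ → ℝ → ℝ := fun x s =>
    2 * (((starRingEnd ℂ) (yt x s) * ytt x s).re
      + c₂ * ((starRingEnd ℂ) (yx x s) * yxt x s).re) with hF₂'def
  -- continuity of the energy integrands and their t-derivatives on the product
  have hcontF₁ : ContinuousOn (fun q : ℝ × ℝ =>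
      ρ * ‖vt q.1 q.2‖ ^ 2 + (α - γ ^ 2 * β) * ‖vx q.1 q.2‖ ^ 2
        + μ * ‖pt q.1 q.2‖ ^ 2 + β * ‖(γ:ℂ) * vx q.1 q.2 - px q.1 q.2‖ ^ 2)
      (Icc 0 l₁ ×ˢ Ici 0) := by
    refine (((continuousOn_const.mul (hvtc.norm.pow 2)).add
      (continuousOn_const.mul (hvxc.norm.pow 2))).add
      (continuousOn_const.mul (hptc.norm.pow 2))).add
      (continuousOn_const.mul
        (((continuousOn_const.mul hvxc).sub hpxc).norm.pow 2))
  have hcontF₁' : ContinuousOn (fun q : ℝ × ℝ => F₁' q.1 q.2) (Icc 0 l₁ ×ˢ Ici 0) := by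
    refine continuousOn_const.mul ?_
    refine (((continuousOn_const.mul (contOn_reConjMul hvtc hvttc)).add
      (continuousOn_const.mul (contOn_reConjMul hvxc hvxtc))).add
      (continuousOn_const.mul (contOn_reConjMul hptc hpttc))).add
      (continuousOn_const.mul (contOn_reConjMul
        ((continuousOn_const.mul hvxc).sub hpxc)
        ((continuousOn_const.mul hvxtc).sub hpxtc)))
  have hcontF₂ : ContinuousOn (fun q : ℝ × ℝ =>
      ‖yt q.1 q.2‖ ^ 2 + c₂ * ‖yx q.1 q.2‖ ^ 2) (Icc l₁ L ×ˢ Ici 0) :=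
    (hytc.norm.pow 2).add (continuousOn_const.mul (hyxc.norm.pow 2))
  have hcontF₂' : ContinuousOn (fun q : ℝ × ℝ => F₂' q.1 q.2) (Icc l₁ L ×ˢ Ici 0) :=
    continuousOn_const.mul ((contOn_reConjMul hytc hyttc).add
      (continuousOn_const.mul (contOn_reConjMul hyxc hyxtc)))
  -- differentiation under the integral sign
  have hD1 : HasDerivAt (fun s => ∫ x in (0:ℝ)..l₁,
      (ρ * ‖vt x s‖ ^ 2 + (α - γ ^ 2 * β) * ‖vx x s‖ ^ 2
        + μ * ‖pt x s‖ ^ 2 + β * ‖(γ:ℂ) * vx x s - px x s‖ ^ 2))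
      (∫ x in (0:ℝ)..l₁, F₁' x t) t := by
    refine hasDerivAt_int _ F₁' ht h0l hcontF₁ hcontF₁' ?_
    intro x hx s hs
    obtain ⟨_, _, _, hvtt, hvxt⟩ := hvd x hx s hs
    obtain ⟨_, _, _, hptt, hpxt⟩ := hpd x hx s hs
    have h1 := hasDerivAt_norm_sq hvtt
    have h2 := hasDerivAt_norm_sq hvxt
    have h3 := hasDerivAt_norm_sq hptt
    have h4 := hasDerivAt_norm_sq ((hvxt.const_mul (γ:ℂ)).sub hpxt)
    have htot := (((h1.const_mul ρ).add (h2.const_mul (α - γ ^ 2 * β))).add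
      (h3.const_mul μ)).add (h4.const_mul β)
    refine htot.congr_deriv ?_
    simp only [hF₁'def, Pi.sub_apply]
    ring
  have hD2 : HasDerivAt (fun s => ∫ x in l₁..L, (‖yt x s‖ ^ 2 + c₂ * ‖yx x s‖ ^ 2))
      (∫ x in l₁..L, F₂' x t) t := by
    refine hasDerivAt_int _ F₂' ht hlL hcontF₂ hcontF₂' ?_
    intro x hx s hs
    obtain ⟨_, _, _, hytt, hyxt⟩ := hyd x hx s hs
    have h1 := hasDerivAt_norm_sq hytt
    have h2 := hasDerivAt_norm_sq hyxt
    have htot := h1.add (h2.const_mul c₂)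
    refine htot.congr_deriv ?_
    simp only [hF₂'def]
    ring
  -- boundary derivative facts
  have hvt0 : vt 0 t = 0 := by
    have h := (hvd 0 h0mem t ht0).2.1
    have h2 : HasDerivAt (fun _ : ℝ => (0:ℂ)) (vt 0 t) t :=
      h.congr_of_eventuallyEq (Filter.eventually_of_mem (Ioi_mem_nhds ht)
        (fun s hs => (hbc0v s (mem_Ici.2 hs.le)).symm))
    exact h2.unique (hasDerivAt_const _ _)
  have hpt0 : pt 0 t = 0 := by
    have h := (hpd 0 h0mem t ht0).2.1
    have h2 : HasDerivAt (fun _ : ℝ => (0:ℂ)) (pt 0 t) t :=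
      h.congr_of_eventuallyEq (Filter.eventually_of_mem (Ioi_mem_nhds ht)
        (fun s hs => (hbc0p s (mem_Ici.2 hs.le)).symm))
    exact h2.unique (hasDerivAt_const _ _)
  have hytL : yt L t = 0 := by
    have h := (hyd L hLmem t ht0).2.1
    have h2 : HasDerivAt (fun _ : ℝ => (0:ℂ)) (yt L t) t :=
      h.congr_of_eventuallyEq (Filter.eventually_of_mem (Ioi_mem_nhds ht)
        (fun s hs => (hbcL s (mem_Ici.2 hs.le)).symm))
    exact h2.unique (hasDerivAt_const _ _)
  have hvtl : vt l₁ t = yt l₁ t := by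
    have h := (hvd l₁ hl₁mem t ht0).2.1
    have h' := (hyd l₁ hl₁mem' t ht0).2.1
    have h2 : HasDerivAt (fun s => y l₁ s) (vt l₁ t) t :=
      h.congr_of_eventuallyEq (Filter.eventually_of_mem (Ioi_mem_nhds ht)
        (fun s hs => (hct s (mem_Ici.2 hs.le)).symm))
    exact h2.unique h'
  -- FTC on the piezoelectric part
  set Φ : ℝ → ℝ := fun u =>
    2 * ((starRingEnd ℂ) (vt u t) * ((α:ℂ) * vx u t - ((γ * β : ℝ):ℂ) * px u t)
      + (starRingEnd ℂ) (pt u t) * ((β:ℂ) * px u t - ((γ * β : ℝ):ℂ) * vx u t)).re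
    with hΦdef
  have hIntF₁' : IntervalIntegrable (fun x => F₁' x t) MeasureTheory.volume 0 l₁ :=
    ((sliceX hcontF₁' ht0).mono (by rw [uIcc_of_le h0l])).intervalIntegrable
  have hΦcont : ContinuousOn Φ (Icc (0:ℝ) l₁) := by
    refine continuousOn_const.mul (Complex.continuous_re.comp_continuousOn ?_)
    refine ((Complex.continuous_conj.comp_continuousOn (sliceX hvtc ht0)).mul
      ((continuousOn_const.mul (sliceX hvxc ht0)).sub
        (continuousOn_const.mul (sliceX hpxc ht0)))).add
      ((Complex.continuous_conj.comp_continuousOn (sliceX hptc ht0)).mul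
      ((continuousOn_const.mul (sliceX hpxc ht0)).sub
        (continuousOn_const.mul (sliceX hvxc ht0))))
  have hFTC1 : ∫ x in (0:ℝ)..l₁, F₁' x t = Φ l₁ - Φ 0 := by
    refine intervalIntegral.integral_eq_sub_of_hasDerivAt_of_le h0l hΦcont ?_ hIntF₁'
    intro x hx
    have hxI : x ∈ Icc (0:ℝ) l₁ := Ioo_subset_Icc_self hx
    obtain ⟨hvx', hvt', hvxx', hvtt', hvxt'⟩ := hvd x hxI t ht0
    obtain ⟨hpx', hpt', hpxx', hptt', hpxt'⟩ := hpd x hxI t ht0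
    have hvtx : HasDerivAt (fun u => vt u t) (vxt x t) x :=
      schwarz_mixed v vx vt vxt (fun a ha b hb => (hvd a ha b hb).1)
        (fun a ha b hb => (hvd a ha b hb).2.1)
        (fun a ha b hb => (hvd a ha b hb).2.2.2.2) hvxc hvxtc hx ht
    have hptx : HasDerivAt (fun u => pt u t) (pxt x t) x :=
      schwarz_mixed p px pt pxt (fun a ha b hb => (hpd a ha b hb).1)
        (fun a ha b hb => (hpd a ha b hb).2.1)
        (fun a ha b hb => (hpd a ha b hb).2.2.2.2) hpxc hpxtc hx ht
    have hc : HasDerivAt (fun u =>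
        (starRingEnd ℂ) (vt u t) * ((α:ℂ) * vx u t - ((γ * β : ℝ):ℂ) * px u t)
        + (starRingEnd ℂ) (pt u t) * ((β:ℂ) * px u t - ((γ * β : ℝ):ℂ) * vx u t))
        ((starRingEnd ℂ) (vxt x t) * ((α:ℂ) * vx x t - ((γ * β : ℝ):ℂ) * px x t)
          + (starRingEnd ℂ) (vt x t) * ((α:ℂ) * vxx x t - ((γ * β : ℝ):ℂ) * pxx x t)
        + ((starRingEnd ℂ) (pxt x t) * ((β:ℂ) * px x t - ((γ * β : ℝ):ℂ) * vx x t)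
          + (starRingEnd ℂ) (pt x t) * ((β:ℂ) * pxx x t - ((γ * β : ℝ):ℂ) * vxx x t))) x :=
      ((hasDerivAt_conj' hvtx).mul ((hvxx'.const_mul ((α:ℂ))).sub
          (hpxx'.const_mul (((γ * β : ℝ):ℂ))))).add
        ((hasDerivAt_conj' hptx).mul ((hpxx'.const_mul ((β:ℂ))).sub
          (hvxx'.const_mul (((γ * β : ℝ):ℂ)))))
    have hre := (hasDerivAt_re' hc).const_mul (2:ℝ)
    have e1 : (α:ℂ) * vxx x t - ((γ * β : ℝ):ℂ) * pxx x t = (ρ:ℂ) * vtt x t := by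
      linear_combination - (hveq t ht0 x hxI)
    have e2 : (β:ℂ) * pxx x t - ((γ * β : ℝ):ℂ) * vxx x t = (μ:ℂ) * ptt x t := by
      linear_combination - (hpeq t ht0 x hxI)
    rw [e1, e2] at hre
    refine hre.congr_deriv ?_
    simp only [hF₁'def, Complex.add_re, Complex.mul_re, Complex.sub_re, Complex.sub_im,
      Complex.add_im, Complex.mul_im, Complex.conj_re, Complex.conj_im,
      Complex.ofReal_re, Complex.ofReal_im]
    ring
  have hΦ0 : Φ 0 = 0 := by simp [hΦdef, hvt0, hpt0]
  -- elastic part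
  set Ψ : ℝ → ℝ := fun u => 2 * c₂ * ((starRingEnd ℂ) (yt u t) * yx u t).re with hΨdef
  have hΦl : Φ l₁ = Ψ l₁ := by
    have hz : (β:ℂ) * px l₁ t - ((γ * β : ℝ):ℂ) * vx l₁ t = 0 := by
      rw [htr2 t ht0]; push_cast; ring
    simp only [hΦdef, hΨdef, htr1 t ht0, hz, mul_zero, add_zero, hvtl]
    simp only [Complex.mul_re, Complex.mul_im, Complex.ofReal_re, Complex.ofReal_im,
      Complex.conj_re, Complex.conj_im]
    ring
  have hΨL : Ψ L = 0 := by simp [hΨdef, hytL]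
  have hIntF₂' : IntervalIntegrable (fun x => F₂' x t) MeasureTheory.volume l₁ L :=
    ((sliceX hcontF₂' ht0).mono (by rw [uIcc_of_le hlL])).intervalIntegrable
  have hIntd : IntervalIntegrable (fun x => 2 * (d₁ x * ‖yt x t‖ ^ 2))
      MeasureTheory.volume l₁ L := by
    refine ((continuousOn_const.mul (hd₁c.mul ((sliceX hytc ht0).norm.pow 2))).mono
      (by rw [uIcc_of_le hlL])).intervalIntegrable
  have hΨcont : ContinuousOn Ψ (Icc l₁ L) :=
    continuousOn_const.mul (contOn_reConjMul1 (sliceX hytc ht0) (sliceX hyxc ht0))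
  have hFTC2 : ∫ x in l₁..L, (F₂' x t + 2 * (d₁ x * ‖yt x t‖ ^ 2)) = Ψ L - Ψ l₁ := by
    refine intervalIntegral.integral_eq_sub_of_hasDerivAt_of_le hlL hΨcont ?_
      (hIntF₂'.add hIntd)
    intro x hx
    have hxI : x ∈ Icc l₁ L := Ioo_subset_Icc_self hx
    obtain ⟨hyx', hyt', hyxx', hytt', hyxt'⟩ := hyd x hxI t ht0
    have hytx : HasDerivAt (fun u => yt u t) (yxt x t) x :=
      schwarz_mixed y yx yt yxt (fun a ha b hb => (hyd a ha b hb).1)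
        (fun a ha b hb => (hyd a ha b hb).2.1)
        (fun a ha b hb => (hyd a ha b hb).2.2.2.2) hyxc hyxtc hx ht
    have hc := (hasDerivAt_conj' hytx).mul hyxx'
    have hre := (hasDerivAt_re' hc).const_mul (2 * c₂)
    have hpde : ytt x t = (c₂:ℂ) * yxx x t - (d₁ x : ℂ) * yt x t := by
      linear_combination hyeq t ht0 x hxI
    refine hre.congr_deriv ?_
    rw [hF₂'def]
    simp only [hpde, norm_sq_complex]
    simp only [Complex.add_re, Complex.mul_re, Complex.sub_re, Complex.sub_im,
      Complex.add_im, Complex.mul_im, Complex.conj_re, Complex.conj_im,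
      Complex.ofReal_re, Complex.ofReal_im]
    ring
  have hsplit : ∫ x in l₁..L, (F₂' x t + 2 * (d₁ x * ‖yt x t‖ ^ 2))
      = (∫ x in l₁..L, F₂' x t) + ∫ x in l₁..L, 2 * (d₁ x * ‖yt x t‖ ^ 2) :=
    intervalIntegral.integral_add hIntF₂' hIntd
  have hconst2 : ∫ x in l₁..L, 2 * (d₁ x * ‖yt x t‖ ^ 2)
      = 2 * ∫ x in l₁..L, d₁ x * ‖yt x t‖ ^ 2 :=
    intervalIntegral.integral_const_mul _ _
  have hF2val : ∫ x in l₁..L, F₂' x t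
      = -Ψ l₁ - 2 * ∫ x in l₁..L, d₁ x * ‖yt x t‖ ^ 2 := by
    have h := hFTC2
    rw [hsplit, hconst2, hΨL] at h
    linarith
  -- assemble
  have hE : HasDerivAt (fun s : ℝ =>
      (1 / 2) * (∫ x in (0:ℝ)..l₁,
        (ρ * ‖vt x s‖ ^ 2 + (α - γ ^ 2 * β) * ‖vx x s‖ ^ 2 +
          μ * ‖pt x s‖ ^ 2 + β * ‖(γ:ℂ) * vx x s - px x s‖ ^ 2)) +
      (1 / 2) * (∫ x in l₁..L, (‖yt x s‖ ^ 2 + c₂ * ‖yx x s‖ ^ 2)))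
      ((1/2) * (∫ x in (0:ℝ)..l₁, F₁' x t) + (1/2) * (∫ x in l₁..L, F₂' x t)) t :=
    (hD1.const_mul (1/2 : ℝ)).add (hD2.const_mul (1/2 : ℝ))
  convert hE using 1
  rw [hFTC1, hΦ0, hΦl, hF2val]
  ring

end Main
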